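/- arXiv:2307.12942 — 9 statements merged into one kernel-verified Lean document; each statement's English description precedes it below -/
import Mathlib

section
/- Let R be a Bézout domain. Then every finitely generated R-submodule of a finitely generated free R-module is itself a free R-module. -/
open Submodule LinearMap

private theorem auxIdealFree (R : Type*) [CommRing R] [IsDomain R] (I : Ideal R)
    (hIp : I.IsPrincipal) : Module.Free R I := by
  obtain ⟨g, hg⟩ := hIp
  rcases eq_or_ne g 0 with rfl | h0
  · rw [hg, Submodule.span_zero_singleton]
    infer_instance
  · rw [hg]
    exact Module.Free.of_equiv (LinearEquiv.toSpanNonzeroSingleton R R g h0)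

set_option synthInstance.maxHeartbeats 1000000 in
set_option maxHeartbeats 1000000 in
private theorem auxFg (R : Type*) [CommRing R] [IsDomain R] [IsBezout R] :
    ∀ (n : ℕ) (N : Submodule R (Fin n → R)), N.FG → Module.Free R N := by
  intro n
  induction n with
  | zero =>
    intro N _
    have : Subsingleton (Fin 0 → R) := ⟨fun a b => funext fun i => i.elim0⟩
    exact Module.Free.of_subsingleton R N
  | succ n ih =>
    intro N hN
    set φ : N →ₗ[R] R := (LinearMap.proj (Fin.last n)).comp N.subtype with hφ
    have hIfg : (LinearMap.range φ).FG := by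
      rw [hφ, LinearMap.range_comp, Submodule.range_subtype]
      exact hN.map _
    haveI hIfree : Module.Free R (LinearMap.range φ) :=
      auxIdealFree R _ (IsBezout.isPrincipal_of_FG _ hIfg)
    obtain ⟨s, hs⟩ := Module.projective_lifting_property φ.rangeRestrict LinearMap.id
      φ.surjective_rangeRestrict
    have hexact : Function.Exact (LinearMap.ker φ.rangeRestrict).subtype φ.rangeRestrict :=
      φ.rangeRestrict.exact_subtype_ker_map
    have e := (Function.Exact.splitSurjectiveEquiv (M := LinearMap.ker φ.rangeRestrict)
      (f := (LinearMap.ker φ.rangeRestrict).subtype) (g := φ.rangeRestrict)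
      hexact (Submodule.injective_subtype (LinearMap.ker φ.rangeRestrict)) ⟨s, hs⟩).1
    haveI : Module.Finite R N := Module.Finite.iff_fg.mpr hN
    haveI hKfin : Module.Finite R (LinearMap.ker φ.rangeRestrict) :=
      Module.Finite.of_surjective ((LinearMap.fst R _ _) ∘ₗ e.toLinearMap)
        (Prod.fst_surjective.comp e.surjective)
    set j : (LinearMap.ker φ.rangeRestrict) →ₗ[R] (Fin n → R) :=
      (LinearMap.funLeft R R Fin.castSucc).comp
        (N.subtype ∘ₗ (LinearMap.ker φ.rangeRestrict).subtype) with hj'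
    have hj : Function.Injective j := by
      intro a b hab
      have h1 : ∀ i : Fin n, (a.1.1 (Fin.castSucc i) : R) = b.1.1 (Fin.castSucc i) :=
        fun i => congrFun hab i
      have ha : φ a.1 = 0 := by
        simpa only [LinearMap.rangeRestrict, LinearMap.codRestrict_apply, ZeroMemClass.coe_zero]
          using congrArg Subtype.val (LinearMap.mem_ker.mp a.2)
      have hb : φ b.1 = 0 := by
        simpa only [LinearMap.rangeRestrict, LinearMap.codRestrict_apply, ZeroMemClass.coe_zero]
          using congrArg Subtype.val (LinearMap.mem_ker.mp b.2)
      have h2 : (a.1.1 (Fin.last n) : R) = b.1.1 (Fin.last n) := by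
        simp only [hφ, LinearMap.comp_apply, LinearMap.proj_apply,
          Submodule.subtype_apply] at ha hb
        rw [ha, hb]
      refine Subtype.ext (Subtype.ext (funext fun i => ?_))
      exact Fin.lastCases h2 h1 i
    have hrjfg : (LinearMap.range j).FG := Module.Finite.iff_fg.mp inferInstance
    haveI hKfree : Module.Free R (LinearMap.ker φ.rangeRestrict) := by
      haveI := ih (LinearMap.range j) hrjfg
      exact Module.Free.of_equiv (LinearEquiv.ofInjective j hj).symm
    exact Module.Free.of_equiv e.symm

/-- Let `R` be a Bézout domain. Then every finitely generated `R`-submodule of a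
finitely generated free `R`-module is itself a free `R`-module. -/
theorem stmt0 (R : Type*) [CommRing R] [IsDomain R] [IsBezout R]
    (M : Type*) [AddCommGroup M] [Module R M] [Module.Finite R M] [Module.Free R M]
    (N : Submodule R M) (hN : N.FG) :
    Module.Free R N := by
  let b := Module.Free.chooseBasis R M
  let E : M ≃ₗ[R] (Fin (Fintype.card (Module.Free.ChooseBasisIndex R M)) → R) :=
    b.equivFun.trans (LinearEquiv.funCongrLeft R R (Fintype.equivFin _).symm)
  haveI := auxFg R _ (N.map E.toLinearMap) (hN.map _)
  exact Module.Free.of_equiv (N.equivMapOfInjective E.toLinearMap E.injective).symm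
end

section
/- Let R be an integral domain such that every finitely generated ideal of R is free as an R-module. Then R is a Bézout domain. -/
/-- Let `R` be an integral domain such that every finitely generated ideal of `R` is
free as an `R`-module. Then `R` is a Bézout domain. -/
theorem stmt1 (R : Type*) [CommRing R] [IsDomain R]
    (h : ∀ I : Ideal R, I.FG → Module.Free R I) :
    IsBezout R := by
  constructor
  intro I hI
  haveI := h I hI
  classical
  set ι := Module.Free.ChooseBasisIndex R I with hι
  set b : Module.Basis ι R I := Module.Free.chooseBasis R I with hb
  rcases isEmpty_or_nonempty ι with hE | ⟨⟨i⟩⟩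
  · haveI : Subsingleton I := b.repr.toEquiv.subsingleton
    have : I = ⊥ := Submodule.eq_bot_of_subsingleton
    rw [this]; exact bot_isPrincipal
  · -- all indices are equal to i
    have hall : ∀ j, j = i := by
      intro j
      by_contra hji
      -- the finsupp l := single i (b j) - single j (b i) maps to 0
      have hli : LinearIndependent R b := b.linearIndependent
      rw [linearIndependent_iff] at hli
      have hz : Finsupp.linearCombination R b
          (Finsupp.single i ((b j : R)) - Finsupp.single j ((b i : R))) = 0 := by
        rw [map_sub, Finsupp.linearCombination_single, Finsupp.linearCombination_single]
        apply Subtype.ext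
        push_cast
        simp only [smul_eq_mul]
        ring
      have := hli _ hz
      have h2 : ((b j : R)) = 0 := by
        have := DFunLike.congr_fun this i
        simpa [Finsupp.single_apply, hji, Ne.symm hji] using this
      exact b.ne_zero j (Subtype.ext h2)
    refine ⟨(b i : R), ?_⟩
    apply le_antisymm
    · intro x hx
      have hmem : (⟨x, hx⟩ : I) ∈ Submodule.span R (Set.range b) := by
        rw [b.span_eq]; trivial
      have hrange : Set.range b ⊆ {b i} := by
        rintro _ ⟨j, rfl⟩; simp [hall j]
      have := Submodule.span_mono hrange hmem
      rw [Submodule.mem_span_singleton] at this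
      obtain ⟨c, hc⟩ := this
      have hx' : x = c * (b i : R) := by
        have := congrArg (Subtype.val) hc
        simpa [smul_eq_mul] using this.symm
      exact Submodule.mem_span_singleton.mpr ⟨c, hx' ▸ rfl⟩
    · rw [Submodule.span_le, Set.singleton_subset_iff]
      exact (b i).2
end

section
/- Let R be a Bézout domain. Then every finitely generated projective R-module is free. -/
open LinearMap

/-- The linear map `(Fin n → R) → (Fin (n+1) → R)` prepending a `0`. -/
noncomputable def consZero (R : Type*) [CommRing R] (n : ℕ) :
    (Fin n → R) →ₗ[R] (Fin (n + 1) → R) :=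
  LinearMap.pi (fun j => Fin.cases (0 : (Fin n → R) →ₗ[R] R) (fun k => LinearMap.proj k) j)

@[simp] theorem consZero_apply_zero {R : Type*} [CommRing R] {n : ℕ} (v : Fin n → R) :
    consZero R n v 0 = 0 := rfl

@[simp] theorem consZero_apply_succ {R : Type*} [CommRing R] {n : ℕ} (v : Fin n → R)
    (k : Fin n) : consZero R n v k.succ = v k := rfl

theorem consZero_funLeft {R : Type*} [CommRing R] {n : ℕ} (w : Fin (n + 1) → R)
    (hw : w 0 = 0) : consZero R n (LinearMap.funLeft R R Fin.succ w) = w := by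
  funext j
  refine Fin.cases ?_ ?_ j
  · simpa using hw.symm
  · intro k; rfl

/-- Key lemma: any retract of `Fin n → R` over a Bézout domain is free. -/
theorem retract_free {R : Type*} [CommRing R] [IsDomain R] [IsBezout R] (n : ℕ) :
    ∀ (M : Type*) [AddCommGroup M] [Module R M]
      (i : M →ₗ[R] (Fin n → R)) (p : (Fin n → R) →ₗ[R] M),
      p.comp i = LinearMap.id → Module.Free R M := by
  induction n with
  | zero =>
    intro M _ _ i p hpi
    have hsub : Subsingleton M := ⟨fun x y => by
      have hx : p (i x) = x := congrArg (fun f => f x) hpi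
      have hy : p (i y) = y := congrArg (fun f => f y) hpi
      rw [← hx, ← hy, Subsingleton.elim (i x) (i y)]⟩
    exact Module.Free.of_subsingleton R M
  | succ n IH =>
    intro M _ _ i p hpi
    have hpi' : ∀ x : M, p (i x) = x := fun x => congrArg (fun f => f x) hpi
    set ℓ : M →ₗ[R] R := (LinearMap.proj 0).comp i with hℓ
    have hℓx : ∀ x : M, ℓ x = i x 0 := fun x => rfl
    -- M is finite, so range ℓ is a f.g. ideal, hence principal
    have hMfin : Module.Finite R M :=
      Module.Finite.of_surjective p (fun x => ⟨i x, hpi' x⟩)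
    have hfg : (LinearMap.range ℓ).FG := by
      rw [← Submodule.map_top]
      exact Submodule.FG.map ℓ Module.Finite.fg_top
    obtain ⟨a, ha⟩ := (IsBezout.isPrincipal_of_FG _ hfg).principal
    by_cases ha0 : a = 0
    · -- first coordinate is identically zero: retract of Fin n → R
      have h0 : ∀ x : M, i x 0 = 0 := by
        intro x
        have hx : ℓ x ∈ LinearMap.range ℓ := LinearMap.mem_range_self ℓ x
        rw [ha, ha0, Submodule.span_zero_singleton] at hx
        simpa [hℓx] using hx
      refine IH M ((LinearMap.funLeft R R Fin.succ).comp i) (p.comp (consZero R n)) ?_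
      ext x
      simp only [LinearMap.comp_apply, LinearMap.id_apply]
      rw [consZero_funLeft (i x) (h0 x), hpi' x]
    · -- a ≠ 0 : split off a free rank-one factor
      have ham : a ∈ LinearMap.range ℓ := ha ▸ Submodule.mem_span_singleton_self a
      obtain ⟨m, hm⟩ := ham
      -- the "coefficient" functional c with c x * a = ℓ x
      set q : R →ₗ[R] R := LinearMap.toSpanSingleton R R a with hq
      have hqinj : Function.Injective q := by
        intro r s hrs
        simp only [hq, LinearMap.toSpanSingleton_apply, smul_eq_mul] at hrs
        exact mul_right_cancel₀ ha0 hrs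
      have hrange : LinearMap.range q = LinearMap.range ℓ := by
        rw [ha]
        exact (LinearMap.span_singleton_eq_range R R a).symm
      set e : R ≃ₗ[R] LinearMap.range ℓ :=
        (LinearEquiv.ofInjective q hqinj).trans (LinearEquiv.ofEq _ _ hrange) with he
      set c : M →ₗ[R] R := e.symm.toLinearMap.comp ℓ.rangeRestrict with hcdef
      have heval : ∀ r : R, ((e r : LinearMap.range ℓ) : R) = r * a := by
        intro r
        simp [he, hq, LinearEquiv.trans_apply, smul_eq_mul]
      have hc : ∀ x : M, c x * a = ℓ x := by
        intro x
        have h4 : e (c x) = ℓ.rangeRestrict x := by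
          show e (e.symm (ℓ.rangeRestrict x)) = ℓ.rangeRestrict x
          exact e.apply_symm_apply _
        have h5 := congrArg Subtype.val h4
        rw [heval (c x)] at h5
        simpa using h5
      have hcm : c m = 1 := by
        have := hc m
        rw [hm] at this
        have : c m * a = 1 * a := by rw [this, one_mul]
        exact mul_right_cancel₀ ha0 this
      have hker : ∀ x : M, ℓ x = 0 ↔ c x = 0 := by
        intro x
        constructor
        · intro h
          have := hc x
          rw [h] at this
          exact (mul_eq_zero.mp this).resolve_right ha0
        · intro h
          rw [← hc x, h, zero_mul]
      -- the projection onto ker ℓ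
      set K := LinearMap.ker ℓ with hK
      have hmemK : ∀ x : M, x - c x • m ∈ K := by
        intro x
        simp only [hK, LinearMap.mem_ker, map_sub, map_smul, hm, smul_eq_mul, hc x, sub_self]
      set π : M →ₗ[R] K :=
        LinearMap.codRestrict K (LinearMap.id - (LinearMap.toSpanSingleton R M m).comp c)
          (fun x => by simpa using hmemK x) with hπ
      have hπx : ∀ x : M, (π x : M) = x - c x • m := fun x => rfl
      have hπK : ∀ x : K, π (x : M) = x := by
        intro x
        apply Subtype.ext
        have hcx : c (x : M) = 0 := (hker _).mp x.2
        rw [hπx, hcx, zero_smul, sub_zero]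
      -- K is a retract of Fin n → R, hence free by induction
      have hiK0 : ∀ x : K, i (x : M) 0 = 0 := fun x => x.2
      have hKfree : Module.Free R K := by
        refine IH K (((LinearMap.funLeft R R Fin.succ).comp i).comp K.subtype)
          ((π.comp p).comp (consZero R n)) ?_
        ext x
        simp only [LinearMap.comp_apply, LinearMap.id_apply, Submodule.coe_subtype]
        rw [consZero_funLeft (i (x : M)) (hiK0 x), hpi' (x : M), hπK x]
      -- M ≃ₗ K × R
      have hfree2 : Module.Free R (K × R) := inferInstance
      set toKR : M →ₗ[R] K × R := π.prod c with hto
      set fromKR : (K × R) →ₗ[R] M :=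
        LinearMap.coprod K.subtype (LinearMap.toSpanSingleton R M m) with hfrom
      have h1 : fromKR.comp toKR = LinearMap.id := by
        refine LinearMap.ext fun x => ?_
        simp only [hto, hfrom, LinearMap.comp_apply, LinearMap.id_apply,
          LinearMap.prod_apply, Function.prod, LinearMap.coprod_apply, Submodule.coe_subtype,
          LinearMap.toSpanSingleton_apply]
        rw [hπx]
        abel
      have h2 : toKR.comp fromKR = LinearMap.id := by
        refine LinearMap.ext fun x => ?_
        rcases x with ⟨k, r⟩
        have hck : c (k : M) = 0 := (hker _).mp k.2
        have hval : fromKR (⟨k, r⟩ : K × R) = (k : M) + r • m := by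
          simp [hfrom]
        refine Prod.ext ?_ ?_
        · apply Subtype.ext
          simp only [hto, LinearMap.comp_apply, LinearMap.id_apply, LinearMap.prod_apply,
            Function.prod]
          rw [hval, hπx]
          simp [map_add, hck, hcm, smul_smul]
        · simp only [hto, LinearMap.comp_apply, LinearMap.id_apply, LinearMap.prod_apply,
            Function.prod]
          rw [hval]
          simp [map_add, hck, hcm]
      exact Module.Free.of_equiv (LinearEquiv.ofLinear fromKR toKR h1 h2)

/-- Let `R` be a Bézout domain. Then every finitely generated projective `R`-module
is free. -/
theorem stmt2 (R : Type*) [CommRing R] [IsDomain R] [IsBezout R]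
    (M : Type*) [AddCommGroup M] [Module R M] [Module.Finite R M]
    [Module.Projective R M] :
    Module.Free R M := by
  obtain ⟨n, p, hp⟩ := Module.Finite.exists_fin' R M
  obtain ⟨i, hi⟩ := Module.projective_lifting_property p LinearMap.id hp
  exact retract_free n M i p hi
end

section
/- Let φ : R → S be a surjective homomorphism of commutative local rings. Then for every n ≥ 1, the induced group homomorphism SL_n(R) → SL_n(S) on special linear groups is surjective. -/
/-- Let `φ : R → S` be a surjective homomorphism of commutative local rings.  Then for
every `n ≥ 1` the induced homomorphism `SL_n(R) → SL_n(S)` is surjective. -/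
theorem stmt5 (R S : Type*) [CommRing R] [IsLocalRing R] [CommRing S] [IsLocalRing S]
    (φ : R →+* S) (hφ : Function.Surjective φ) (n : ℕ) (hn : 1 ≤ n) :
    Function.Surjective
      (Matrix.SpecialLinearGroup.map (n := Fin n) φ :
        Matrix.SpecialLinearGroup (Fin n) R → Matrix.SpecialLinearGroup (Fin n) S) := by
  have : IsLocalHom φ := IsLocalHom.of_surjective φ hφ
  intro A
  -- lift entries
  choose f hf using hφ
  set M : Matrix (Fin n) (Fin n) R := fun i j => f (A.1 i j) with hM
  have hMmap : M.map φ = A.1 := by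
    ext i j; exact hf _
  have hdet : φ M.det = 1 := by
    rw [RingHom.map_det, RingHom.mapMatrix_apply, hMmap]
    exact A.2
  have hunit : IsUnit M.det := isUnit_of_map_unit φ M.det (hdet ▸ isUnit_one)
  obtain ⟨u, hu⟩ := hunit
  set i0 : Fin n := ⟨0, hn⟩
  set M' : Matrix (Fin n) (Fin n) R := M.updateRow i0 ((↑u⁻¹ : R) • M i0) with hM'
  have hdet' : M'.det = 1 := by
    rw [hM', Matrix.det_updateRow_smul, Matrix.updateRow_eq_self, ← hu]
    exact u.inv_mul
  refine ⟨⟨M', hdet'⟩, ?_⟩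
  have hφu : φ (↑u⁻¹ : R) = 1 := by
    have h1 : φ ↑u * φ ↑u⁻¹ = 1 := by rw [← map_mul, u.mul_inv, map_one]
    have h2 : φ ↑u = 1 := by rw [hu]; exact hdet
    rwa [h2, one_mul] at h1
  ext i j
  simp only [Matrix.SpecialLinearGroup.map, MonoidHom.coe_mk, OneHom.coe_mk]
  show (M'.map φ) i j = A.1 i j
  rw [hM']
  by_cases h : i = i0
  · subst h
    simp [Matrix.map_apply, Matrix.updateRow_self, hφu, ← hMmap, Matrix.map_apply]
  · simp [Matrix.map_apply, Matrix.updateRow_ne h, ← hMmap, Matrix.map_apply]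
end

section
/- Let O be a discrete valuation ring with uniformizer π whose residue field is finite with q elements, let m ≥ 1 and d ≥ 1, and set R = O/π^m O. Then the cardinality of P^d(R), the set of orbits of the scaling action of R^× on the unimodular vectors in R^{d+1}, equals q^{(m-1)d}·(q^{d+1} − 1)/(q − 1). -/
/-- A vector over a commutative ring is unimodular if its coordinates generate the
unit ideal. -/
def Unimodular {R : Type*} [CommRing R] {n : ℕ} (v : Fin n → R) : Prop :=
  Ideal.span (Set.range v) = ⊤

/-- The scaling action of `Rˣ` on unimodular vectors, as an equivalence relation. -/
def unimodSetoid (R : Type*) [CommRing R] (n : ℕ) :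
    Setoid {v : Fin n → R // Unimodular v} where
  r v w := ∃ u : Rˣ, ∀ i, (u : R) * v.1 i = w.1 i
  iseqv := by
    constructor
    · exact fun v => ⟨1, fun i => one_mul _⟩
    · rintro v w ⟨u, hu⟩
      exact ⟨u⁻¹, fun i => by rw [← hu i, ← mul_assoc, Units.inv_mul, one_mul]⟩
    · rintro a b c ⟨u, hu⟩ ⟨t, ht⟩
      exact ⟨t * u, fun i => by rw [Units.val_mul, mul_assoc, hu i, ht i]⟩

/-- `P^(n-1)(R)`: the set of orbits of the scaling action of `Rˣ` on the unimodular
vectors in `Rⁿ`. -/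
def ProjSet (R : Type*) [CommRing R] (n : ℕ) := Quotient (unimodSetoid R n)

/-! ### Auxiliary lemmas -/

/-- Cardinality of the quotient of a DVR by a power of the maximal ideal. -/
theorem cardA (O : Type*) [CommRing O] [IsDomain O] [IsDiscreteValuationRing O]
    (π : O) (hπ : Irreducible π) (q : ℕ)
    (hq : Nat.card (IsLocalRing.ResidueField O) = q) (n : ℕ) :
    Nat.card (O ⧸ Ideal.span {π ^ n}) = q ^ n := by
  haveI hprime : (Ideal.span {π} : Ideal O).IsPrime :=
    (Ideal.span_singleton_prime hπ.ne_zero).mpr hπ.prime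
  have hbot : (Ideal.span {π} : Ideal O) ≠ ⊥ := by
    simpa [Ideal.span_singleton_eq_bot] using hπ.ne_zero
  have h1 : Nat.card (O ⧸ Ideal.span {π}) = q := by
    have : Nat.card (O ⧸ IsLocalRing.maximalIdeal O) = q := hq
    rwa [hπ.maximalIdeal_eq] at this
  rw [← Ideal.span_singleton_pow, ← Submodule.cardQuot_apply,
    cardQuot_pow_of_prime hbot, Submodule.cardQuot_apply, h1]

/-- Units of the quotient `O ⧸ (π ^ m)` are classes of elements not divisible by `π`. -/
theorem unitB (O : Type*) [CommRing O] [IsDomain O] [IsDiscreteValuationRing O]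
    (π : O) (hπ : Irreducible π) (m : ℕ) (hm : 1 ≤ m) (x : O) :
    IsUnit (Ideal.Quotient.mk (Ideal.span {π ^ m}) x) ↔ x ∉ Ideal.span {π} := by
  constructor
  · rintro ⟨u, hu⟩ hx
    obtain ⟨y, hy⟩ := Ideal.Quotient.mk_surjective ((u⁻¹ : (O ⧸ Ideal.span {π^m})ˣ) : O ⧸ Ideal.span {π^m})
    have : (Ideal.Quotient.mk (Ideal.span {π ^ m})) (x * y) = 1 := by
      rw [map_mul, ← hu, hy, u.mul_inv]
    rw [← map_one (Ideal.Quotient.mk (Ideal.span {π ^ m})), Ideal.Quotient.mk_eq_mk_iff_sub_mem] at this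
    have hmem : x * y - 1 ∈ Ideal.span {π} := by
      rw [← Ideal.span_singleton_pow] at this
      exact Ideal.pow_le_self (Nat.one_le_iff_ne_zero.mp hm) this
    have h1 : (1 : O) ∈ Ideal.span {π} := by
      have := Ideal.sub_mem _ (Ideal.mul_mem_right y _ hx) hmem
      simpa using this
    exact hπ.not_isUnit (Ideal.span_singleton_eq_top.mp (Ideal.eq_top_of_isUnit_mem _ h1 isUnit_one))
  · intro hx
    have : IsUnit x := by
      by_contra h
      exact hx (by rwa [← hπ.maximalIdeal_eq, IsLocalRing.mem_maximalIdeal, mem_nonunits_iff])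
    exact this.map _

/-- Cardinality of the set of nonunits of `O ⧸ (π ^ m)`. -/
theorem cardC (O : Type*) [CommRing O] [IsDomain O] [IsDiscreteValuationRing O]
    (π : O) (hπ : Irreducible π) (q : ℕ) (hq2 : 2 ≤ q)
    (hq : Nat.card (IsLocalRing.ResidueField O) = q) (m : ℕ) (hm : 1 ≤ m) :
    Nat.card {r : O ⧸ Ideal.span {π ^ m} // ¬ IsUnit r} = q ^ (m - 1) := by
  have hle : (Ideal.span {π ^ m} : Ideal O) ≤ Ideal.span {π} := by
    rw [Ideal.span_singleton_le_span_singleton]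
    exact dvd_pow_self π (by omega)
  have key := Submodule.card_quotient_mul_card_quotient
    (Ideal.span {π} : Ideal O) (Ideal.span {π ^ m}) hle
  have e : {r : O ⧸ Ideal.span {π ^ m} // ¬ IsUnit r} ≃
      (Submodule.map (Ideal.span {π ^ m} : Ideal O).mkQ (Ideal.span {π} : Ideal O)) := by
    refine Equiv.subtypeEquivRight fun r => ?_
    obtain ⟨x, rfl⟩ := Ideal.Quotient.mk_surjective r
    rw [unitB O π hπ m hm x, not_not]
    constructor
    · intro hx
      exact Submodule.mem_map.mpr ⟨x, hx, rfl⟩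
    · rintro h
      obtain ⟨y, hy, hxy⟩ := Submodule.mem_map.mp h
      have : x - y ∈ Ideal.span {π ^ m} := by
        rw [← Ideal.Quotient.mk_eq_mk_iff_sub_mem]
        exact (hxy : Ideal.Quotient.mk _ y = Ideal.Quotient.mk _ x).symm
      have := Ideal.add_mem _ (hle this) hy
      simpa using this
  rw [Nat.card_congr e]
  have h1 : Nat.card (O ⧸ (Ideal.span {π} : Ideal O)) = q := by
    have := cardA O π hπ q hq 1
    simpa using this
  have h2 : Nat.card (O ⧸ (Ideal.span {π ^ m} : Ideal O)) = q ^ m := cardA O π hπ q hq m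
  rw [h1, h2] at key
  have : q ^ m = q ^ (m - 1) * q := by
    rw [← pow_succ]
    congr 1
    omega
  rw [this] at key
  exact Nat.eq_of_mul_eq_mul_right (show 0 < q by omega) key

/-- In a local ring, a vector is unimodular iff one of its coordinates is a unit. -/
theorem unimodD {R : Type*} [CommRing R] [IsLocalRing R] {n : ℕ} (v : Fin n → R) :
    Unimodular v ↔ ∃ i, IsUnit (v i) := by
  constructor
  · intro h
    by_contra hc
    push_neg at hc
    have : Ideal.span (Set.range v) ≤ IsLocalRing.maximalIdeal R := by
      rw [Ideal.span_le]
      rintro _ ⟨i, rfl⟩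
      exact hc i
    rw [h] at this
    exact (IsLocalRing.maximalIdeal.isMaximal R).ne_top (top_le_iff.mp this)
  · rintro ⟨i, hi⟩
    exact Ideal.eq_top_of_isUnit_mem _ (Ideal.subset_span (Set.mem_range_self i)) hi

theorem unitsEquiv (R : Type*) [CommRing R] : Nonempty (Rˣ ≃ {r : R // IsUnit r}) := by
  refine ⟨Equiv.ofBijective (fun u => ⟨u, u.isUnit⟩)
    ⟨fun u u' h => Units.ext (congrArg Subtype.val h), ?_⟩⟩
  rintro ⟨x, hx⟩
  exact ⟨hx.unit, rfl⟩

/-- Counting unimodular vectors over a finite local ring. -/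
theorem countF (R : Type*) [CommRing R] [IsLocalRing R] [Finite R] (n : ℕ) :
    Nat.card {v : Fin n → R // Unimodular v} =
      Nat.card R ^ n - Nat.card {r : R // ¬ IsUnit r} ^ n := by
  classical
  haveI : Fintype R := Fintype.ofFinite R
  have e : {v : Fin n → R // ¬ Unimodular v} ≃ (Fin n → {r : R // ¬ IsUnit r}) := by
    refine (Equiv.subtypeEquivRight fun v => ?_).trans (Equiv.subtypePiEquivPi)
    rw [unimodD]
    push_neg
    rfl
  have h1 : Nat.card {v : Fin n → R // ¬ Unimodular v} = Nat.card {r : R // ¬ IsUnit r} ^ n := by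
    rw [Nat.card_congr e, Nat.card_fun]
    simp
  have h2 := Fintype.card_subtype_compl (p := fun v : Fin n → R => Unimodular v)
  have h3 : Fintype.card {v : Fin n → R // Unimodular v} ≤ Fintype.card (Fin n → R) :=
    Fintype.card_subtype_le _
  have hR : Nat.card (Fin n → R) = Nat.card R ^ n := by rw [Nat.card_fun]; simp
  simp only [Nat.card_eq_fintype_card] at *
  omega

/-- Orbit counting for the free scaling action on unimodular vectors. -/
theorem orbitE (R : Type*) [CommRing R] [IsLocalRing R] [Finite R] (n : ℕ) :
    Nat.card {v : Fin n → R // Unimodular v} = Nat.card (ProjSet R n) * Nat.card Rˣ := by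
  classical
  have fib : ∀ c : ProjSet R n,
      Nonempty ({v : {v : Fin n → R // Unimodular v} //
        Quotient.mk (unimodSetoid R n) v = c} ≃ Rˣ) := by
    intro c
    set v₀ : {v : Fin n → R // Unimodular v} := c.out with hv₀
    obtain ⟨i₀, hi₀⟩ := (unimodD v₀.1).mp v₀.2
    refine ⟨(Equiv.ofBijective (fun u : Rˣ =>
      (⟨⟨fun i => (u : R) * v₀.1 i, ?_⟩, ?_⟩ :
        {v : {v : Fin n → R // Unimodular v} //
          Quotient.mk (unimodSetoid R n) v = c})) ⟨?_, ?_⟩).symm⟩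
    · rw [unimodD]
      exact ⟨i₀, u.isUnit.mul hi₀⟩
    · rw [← c.out_eq]
      exact Quotient.sound ⟨u⁻¹, fun i => by rw [← mul_assoc, Units.inv_mul, one_mul]⟩
    · intro u u' h
      have h1 : (u : R) * v₀.1 i₀ = (u' : R) * v₀.1 i₀ := by
        have := congrArg (fun w => w.1.1 i₀) h
        simpa using this
      exact Units.ext (hi₀.mul_left_cancel
        ((mul_comm (v₀.1 i₀) (u : R)) ▸ (mul_comm (v₀.1 i₀) (u' : R)) ▸ h1))
    · rintro ⟨⟨v, hv⟩, hc⟩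
      have heq : Quotient.mk (unimodSetoid R n) v₀ = Quotient.mk (unimodSetoid R n) ⟨v, hv⟩ := by
        rw [hc, hv₀]; exact Quotient.out_eq c
      have : ∃ u : Rˣ, ∀ i, (u : R) * v₀.1 i = v i := Quotient.exact heq
      obtain ⟨u, hu⟩ := this
      refine ⟨u, ?_⟩
      apply Subtype.ext; apply Subtype.ext
      funext i
      exact hu i
  have e1 : {v : Fin n → R // Unimodular v} ≃
      Σ c : ProjSet R n, {v : {v : Fin n → R // Unimodular v} //
        Quotient.mk (unimodSetoid R n) v = c} :=
    (Equiv.sigmaFiberEquiv _).symm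
  have e2 : (Σ c : ProjSet R n, {v : {v : Fin n → R // Unimodular v} //
        Quotient.mk (unimodSetoid R n) v = c}) ≃ (ProjSet R n) × Rˣ :=
    (Equiv.sigmaCongrRight fun c => (fib c).some).trans (Equiv.sigmaEquivProd _ _)
  rw [Nat.card_congr (e1.trans e2), Nat.card_prod]

theorem geomN (q n : ℕ) (hq : 1 ≤ q) :
    (q - 1) * ∑ i ∈ Finset.range n, q ^ i = q ^ n - 1 := by
  induction n with
  | zero => simp
  | succ n ih =>
    rw [Finset.sum_range_succ, Nat.mul_add, ih]
    have h1 : 1 ≤ q ^ n := Nat.one_le_pow _ _ (by omega)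
    have h2 : (q - 1) * q ^ n = q ^ (n + 1) - q ^ n := by
      rw [Nat.sub_mul, one_mul, ← pow_succ']
    have h3 : q ^ n ≤ q ^ (n + 1) := Nat.pow_le_pow_right (by omega) (by omega)
    omega

theorem arith (q m d : ℕ) (hq : 2 ≤ q) (hm : 1 ≤ m) :
    q ^ ((m - 1) * d) * ((q ^ (d + 1) - 1) / (q - 1)) * (q ^ m - q ^ (m - 1)) =
      q ^ (m * (d + 1)) - q ^ ((m - 1) * (d + 1)) := by
  obtain ⟨m', rfl⟩ : ∃ m', m = m' + 1 := ⟨m - 1, by omega⟩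
  simp only [Nat.add_sub_cancel]
  have hs := geomN q (d + 1) (by omega)
  have hdiv : (q ^ (d + 1) - 1) / (q - 1) = ∑ i ∈ Finset.range (d + 1), q ^ i := by
    rw [← hs, Nat.mul_div_cancel_left _ (by omega)]
  rw [hdiv]
  have h1 : q ^ (m' + 1) - q ^ m' = q ^ m' * (q - 1) := by
    rw [Nat.mul_sub, mul_one, ← pow_succ]
  rw [h1]
  calc q ^ (m' * d) * (∑ i ∈ Finset.range (d + 1), q ^ i) * (q ^ m' * (q - 1))
      = (q ^ (m' * d) * q ^ m') * ((q - 1) * ∑ i ∈ Finset.range (d + 1), q ^ i) := by ring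
    _ = q ^ (m' * (d + 1)) * (q ^ (d + 1) - 1) := by rw [hs, ← pow_add, Nat.mul_succ]
    _ = q ^ (m' * (d + 1)) * q ^ (d + 1) - q ^ (m' * (d + 1)) := by rw [Nat.mul_sub, mul_one]
    _ = q ^ ((m' + 1) * (d + 1)) - q ^ (m' * (d + 1)) := by rw [← pow_add, Nat.succ_mul]

/-- Let `O` be a discrete valuation ring with uniformizer `π` and finite residue field
with `q` elements, let `m, d ≥ 1` and `R = O/π^m O`.  Then
`|P^d(R)| = q^((m-1)d) * (q^(d+1) - 1)/(q - 1)`. -/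
theorem stmt10 (O : Type*) [CommRing O] [IsDomain O] [IsDiscreteValuationRing O]
    (π : O) (hπ : Irreducible π)
    [Finite (IsLocalRing.ResidueField O)] (q : ℕ)
    (hq : Nat.card (IsLocalRing.ResidueField O) = q)
    (m d : ℕ) (hm : 1 ≤ m) (hd : 1 ≤ d) :
    Nat.card (ProjSet (O ⧸ Ideal.span {π ^ m}) (d + 1)) =
      q ^ ((m - 1) * d) * ((q ^ (d + 1) - 1) / (q - 1)) := by
  classical
  have hq2 : 2 ≤ q := by
    rw [← hq]
    exact Finite.one_lt_card_iff_nontrivial.mpr inferInstance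
  have hcardR : Nat.card (O ⧸ Ideal.span {π ^ m}) = q ^ m := cardA O π hπ q hq m
  haveI : Finite (O ⧸ Ideal.span {π ^ m}) :=
    Nat.finite_of_card_ne_zero (by rw [hcardR]; positivity)
  haveI : Nontrivial (O ⧸ Ideal.span {π ^ m}) := by
    refine Finite.one_lt_card_iff_nontrivial.mp ?_
    rw [hcardR]
    exact Nat.one_lt_pow (by omega) (by omega)
  haveI : IsLocalRing (O ⧸ Ideal.span {π ^ m}) :=
    IsLocalRing.of_surjective' (Ideal.Quotient.mk _) Ideal.Quotient.mk_surjective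
  have hnon : Nat.card {r : O ⧸ Ideal.span {π ^ m} // ¬ IsUnit r} = q ^ (m - 1) :=
    cardC O π hπ q hq2 hq m hm
  have hun : Nat.card (O ⧸ Ideal.span {π ^ m})ˣ = q ^ m - q ^ (m - 1) := by
    rw [Nat.card_congr (unitsEquiv _).some]
    haveI : Fintype (O ⧸ Ideal.span {π ^ m}) := Fintype.ofFinite _
    have h2 := Fintype.card_subtype_compl (p := fun r : O ⧸ Ideal.span {π ^ m} => IsUnit r)
    have h3 : Fintype.card {r : O ⧸ Ideal.span {π ^ m} // IsUnit r} ≤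
        Fintype.card (O ⧸ Ideal.span {π ^ m}) := Fintype.card_subtype_le _
    simp only [Nat.card_eq_fintype_card] at *
    omega
  have horb := orbitE (O ⧸ Ideal.span {π ^ m}) (d + 1)
  have hcount := countF (O ⧸ Ideal.span {π ^ m}) (d + 1)
  rw [hcount, hcardR, hnon, hun] at horb
  have key : Nat.card (ProjSet (O ⧸ Ideal.span {π ^ m}) (d + 1)) * (q ^ m - q ^ (m - 1)) =
      q ^ (m * (d + 1)) - q ^ ((m - 1) * (d + 1)) := by
    rw [← horb, ← pow_mul, ← pow_mul]
  have harith := arith q m d hq2 hm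
  have hpos : 0 < q ^ m - q ^ (m - 1) := by
    have : q ^ (m - 1) < q ^ m := Nat.pow_lt_pow_right (by omega) (by omega)
    omega
  refine Nat.eq_of_mul_eq_mul_right hpos ?_
  rw [key, harith]
end

section
/- Let p be a prime and let (M_m)_{m ≥ 1} be a sequence of abelian groups together with surjective group homomorphisms f_m : M_{m+1} → M_m, where each M_m has no p-torsion (multiplication by p on M_m is injective). Let L be the inverse limit, realized as the subgroup of the product ∏_m M_m consisting of sequences (x_m) with f_m(x_{m+1}) = x_m for all m, and let L' be the analogous subgroup of ∏_m (M_m/pM_m) of sequences compatible with the induced maps. Then the natural group homomorphism L/pL → L' is an isomorphism. -/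
/-- The subgroup `pA` of `p`-th multiples of an additive commutative group `A`. -/
def pMultiples (p : ℕ) (A : Type*) [AddCommGroup A] : AddSubgroup A where
  carrier := Set.range fun a : A => p • a
  add_mem' := by rintro _ _ ⟨a, rfl⟩ ⟨b, rfl⟩; exact ⟨a + b, smul_add p a b⟩
  zero_mem' := ⟨0, smul_zero p⟩
  neg_mem' := by rintro _ ⟨a, rfl⟩; exact ⟨-a, smul_neg p a⟩

section
variable (p : ℕ) (M : ℕ → Type*) [∀ m, AddCommGroup (M m)] (f : ∀ m, M (m + 1) →+ M m)

/-- The inverse limit `L` of the system `(M_m, f_m)`, realized as the subgroup of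
`∏ m, M m` of compatible sequences. -/
def invLim : AddSubgroup (∀ m, M m) where
  carrier := {x | ∀ m, f m (x (m + 1)) = x m}
  add_mem' := by intro x y hx hy m; simp [hx m, hy m]
  zero_mem' := by intro m; simp
  neg_mem' := by intro x hx m; simp [hx m]

/-- The homomorphism `M_(m+1)/pM_(m+1) → M_m/pM_m` induced by `f_m`. -/
def fbar (m : ℕ) :
    (M (m + 1) ⧸ pMultiples p (M (m + 1))) →+ (M m ⧸ pMultiples p (M m)) :=
  QuotientAddGroup.map _ _ (f m) (by
    rintro _ ⟨a, rfl⟩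
    exact ⟨f m a, (map_nsmul (f m) p a).symm⟩)

/-- The inverse limit `L'` of the system `(M_m/pM_m)` with the induced maps. -/
def invLimModP : AddSubgroup (∀ m, M m ⧸ pMultiples p (M m)) where
  carrier := {x | ∀ m, fbar p M f m (x (m + 1)) = x m}
  add_mem' := by intro x y hx hy m; simp [hx m, hy m]
  zero_mem' := by intro m; simp
  neg_mem' := by intro x hx m; simp [hx m]

/-- Componentwise reduction modulo `p`, as a homomorphism `L → L'`. -/
def reduceHom : invLim M f →+ invLimModP p M f where
  toFun x := ⟨fun m => QuotientAddGroup.mk (x.1 m), fun m => by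
    show fbar p M f m (QuotientAddGroup.mk (x.1 (m + 1))) = _
    rw [fbar, QuotientAddGroup.map_mk, x.2 m]⟩
  map_zero' := rfl
  map_add' x y := rfl

/-- The natural homomorphism `L/pL → L'`. -/
def natMap : (invLim M f ⧸ pMultiples p (invLim M f)) →+ invLimModP p M f :=
  QuotientAddGroup.lift _ (reduceHom p M f) (by
    rintro _ ⟨a, rfl⟩
    simp only [AddMonoidHom.mem_ker]
    show reduceHom p M f (p • a) = 0
    rw [map_nsmul (reduceHom p M f) p a]
    ext m
    show (p • (reduceHom p M f a).1) m = 0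
    show p • QuotientAddGroup.mk (a.1 m) = (0 : M m ⧸ pMultiples p (M m))
    rw [← QuotientAddGroup.mk_nsmul]
    exact (QuotientAddGroup.eq_zero_iff _).mpr ⟨a.1 m, rfl⟩)

/-- Let `p` be a prime and `(M_m)` a sequence of abelian groups with surjective
homomorphisms `f_m : M_(m+1) → M_m`, each `M_m` without `p`-torsion.  Let `L` be the
inverse limit of the `M_m` and `L'` the inverse limit of the `M_m/pM_m`.  Then the
natural homomorphism `L/pL → L'` is an isomorphism. -/
theorem stmt13 (hp : p.Prime)
    (hsurj : ∀ m, Function.Surjective (f m))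
    (htf : ∀ m, Function.Injective fun x : M m => p • x) :
    Function.Bijective (natMap p M f) := by
  constructor
  · rw [injective_iff_map_eq_zero]
    intro q hq
    obtain ⟨x, rfl⟩ := QuotientAddGroup.mk_surjective q
    have hq' : reduceHom p M f x = 0 := hq
    have hx : ∀ m, ∃ y : M m, p • y = x.1 m := by
      intro m
      have h1 : (QuotientAddGroup.mk (x.1 m) : M m ⧸ pMultiples p (M m)) = 0 :=
        congrFun (congrArg Subtype.val hq') m
      exact (QuotientAddGroup.eq_zero_iff _).mp h1
    choose y hy using hx
    have hcomp : ∀ m, f m (y (m + 1)) = y m := by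
      intro m
      apply htf m
      show p • f m (y (m + 1)) = p • y m
      rw [← map_nsmul, hy, x.2 m, hy]
    rw [QuotientAddGroup.eq_zero_iff]
    refine ⟨⟨y, hcomp⟩, ?_⟩
    ext m
    exact hy m
  · intro z
    have step : ∀ m (a : M m), QuotientAddGroup.mk a = z.1 m →
        ∃ b : M (m + 1), QuotientAddGroup.mk b = z.1 (m + 1) ∧ f m b = a := by
      intro m a ha
      obtain ⟨c, hc⟩ := QuotientAddGroup.mk_surjective (z.1 (m + 1))
      have h1 : (QuotientAddGroup.mk (f m c) : M m ⧸ pMultiples p (M m))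
          = QuotientAddGroup.mk a := by
        rw [ha, ← z.2 m, ← hc, fbar, QuotientAddGroup.map_mk]
      have h2 : f m c - a ∈ pMultiples p (M m) := by
        have := QuotientAddGroup.eq_iff_sub_mem.mp h1
        exact this
      obtain ⟨u, hu⟩ := h2
      obtain ⟨v, hv⟩ := hsurj m u
      refine ⟨c - p • v, ?_, ?_⟩
      · rw [QuotientAddGroup.mk_sub, hc]
        have : (QuotientAddGroup.mk (p • v) : M (m+1) ⧸ pMultiples p (M (m+1))) = 0 :=
          (QuotientAddGroup.eq_zero_iff _).mpr ⟨v, rfl⟩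
        rw [this, sub_zero]
      · have : f m (p • v) = f m c - a := by rw [map_nsmul, hv]; exact hu
        rw [map_sub, this]; abel
  
    have step' : ∀ m (a : {a : M m // QuotientAddGroup.mk a = z.1 m}),
        {b : M (m + 1) // QuotientAddGroup.mk b = z.1 (m + 1) ∧ f m b = a.1} :=
      fun m a => ⟨(step m a.1 a.2).choose, (step m a.1 a.2).choose_spec⟩
    obtain ⟨a0, ha0⟩ := QuotientAddGroup.mk_surjective (z.1 0)
    let seq : ∀ m, {a : M m // QuotientAddGroup.mk a = z.1 m} :=
      fun m => Nat.rec ⟨a0, ha0⟩ (fun n prev => ⟨(step' n prev).1, (step' n prev).2.1⟩) m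
    have hcomp : ∀ m, f m ((seq (m + 1)).1) = (seq m).1 := fun m => (step' m (seq m)).2.2
    refine ⟨QuotientAddGroup.mk ⟨fun m => (seq m).1, hcomp⟩, ?_⟩
    have : natMap p M f (QuotientAddGroup.mk ⟨fun m => (seq m).1, hcomp⟩)
        = reduceHom p M f ⟨fun m => (seq m).1, hcomp⟩ := rfl
    rw [this]
    ext m
    exact (seq m).2


end
end

section
/- Let p be a prime, G a group, and let 0 → A → B → C → 0 be a short exact sequence of abelian groups equipped with G-actions by group automorphisms, where the maps α : A → B and β : B → C are G-equivariant (α injective, β surjective, ker β = im α). Assume that G acts trivially on A, that C has no p-torsion (multiplication by p on C is injective), and that the only G-invariant element of C/pC is 0. Then the homomorphism A/pA → (B/pB)^G induced by α is an isomorphism, where (B/pB)^G denotes the subgroup of G-invariant elements of B/pB. -/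
/-- The homomorphism `A/pA → B/pB` induced by a homomorphism `α : A → B`. -/
def mapBar (p : ℕ) {A B : Type*} [AddCommGroup A] [AddCommGroup B] (α : A →+ B) :
    (A ⧸ pMultiples p A) →+ (B ⧸ pMultiples p B) :=
  QuotientAddGroup.map _ _ α (by
    rintro _ ⟨a, rfl⟩
    exact ⟨α a, (map_nsmul α p a).symm⟩)

/-- The action of a group element `g` on `B/pB` induced by a distributive action
of `G` on `B`. -/
def actionBar (p : ℕ) {G : Type*} [Group G] (B : Type*) [AddCommGroup B]
    [DistribMulAction G B] (g : G) : (B ⧸ pMultiples p B) →+ (B ⧸ pMultiples p B) :=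
  QuotientAddGroup.map _ _ (DistribMulAction.toAddMonoidHom B g) (by
    rintro _ ⟨b, rfl⟩
    exact ⟨g • b, (map_nsmul (DistribMulAction.toAddMonoidHom B g) p b).symm⟩)


lemma mapBar_mk' (p : ℕ) {A B : Type*} [AddCommGroup A] [AddCommGroup B] (α : A →+ B) (a : A) :
    mapBar p α (QuotientAddGroup.mk a) = QuotientAddGroup.mk (α a) := rfl

lemma actionBar_mk' (p : ℕ) {G : Type*} [Group G] {B : Type*} [AddCommGroup B]
    [DistribMulAction G B] (g : G) (b : B) :
    actionBar p B g (QuotientAddGroup.mk b) = QuotientAddGroup.mk (g • b) := rfl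

lemma mem_pMultiples {p : ℕ} {A : Type*} [AddCommGroup A] {x : A} :
    x ∈ pMultiples p A ↔ ∃ a : A, p • a = x := Iff.rfl

/-- Let `p` be a prime, `G` a group, and `0 → A → B → C → 0` a short exact sequence of
abelian groups with `G`-actions and `G`-equivariant maps `α, β`.  Assume `G` acts
trivially on `A`, `C` has no `p`-torsion, and the only `G`-invariant element of
`C/pC` is `0`.  Then the induced homomorphism `A/pA → B/pB` is injective with image
exactly the `G`-invariants of `B/pB`; that is, `A/pA → (B/pB)^G` is an
isomorphism. -/
theorem stmt14 (p : ℕ) (hp : p.Prime) (G : Type*) [Group G]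
    (A B C : Type*) [AddCommGroup A] [AddCommGroup B] [AddCommGroup C]
    [DistribMulAction G A] [DistribMulAction G B] [DistribMulAction G C]
    (α : A →+ B) (β : B →+ C)
    (hαequiv : ∀ (g : G) (a : A), α (g • a) = g • α a)
    (hβequiv : ∀ (g : G) (b : B), β (g • b) = g • β b)
    (hGA : ∀ (g : G) (a : A), g • a = a)
    (hαinj : Function.Injective α)
    (hβsurj : Function.Surjective β)
    (hexact : ∀ b : B, β b = 0 ↔ b ∈ α.range)
    (hCtf : ∀ c : C, p • c = 0 → c = 0)
    (hCinv : ∀ x : C ⧸ pMultiples p C, (∀ g : G, actionBar p C g x = x) → x = 0) :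
    Function.Injective (mapBar p α) ∧
      Set.range (mapBar p α) =
        {x : B ⧸ pMultiples p B | ∀ g : G, actionBar p B g x = x} := by
  constructor
  · rw [injective_iff_map_eq_zero]
    intro x hx
    induction x using QuotientAddGroup.induction_on with
    | H a =>
      rw [mapBar_mk', QuotientAddGroup.eq_zero_iff, mem_pMultiples] at hx
      rw [QuotientAddGroup.eq_zero_iff, mem_pMultiples]
      obtain ⟨b, hb⟩ := hx
      have h1 : p • β b = 0 := by
        rw [← map_nsmul, hb]
        exact (hexact _).2 ⟨a, rfl⟩
      obtain ⟨a', ha'⟩ := (hexact b).1 (hCtf _ h1)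
      refine ⟨a', hαinj ?_⟩
      rw [map_nsmul, ha', hb]
  · ext x
    simp only [Set.mem_range, Set.mem_setOf_eq]
    constructor
    · rintro ⟨y, rfl⟩ g
      induction y using QuotientAddGroup.induction_on with
      | H a =>
        rw [mapBar_mk', actionBar_mk', ← hαequiv, hGA]
    · intro hx
      induction x using QuotientAddGroup.induction_on with
      | H b =>
        have hbg : ∀ g : G, ∃ bg : B, p • bg = -(g • b) + b := by
          intro g
          have h := hx g
          rw [actionBar_mk', QuotientAddGroup.eq, mem_pMultiples] at h
          exact h
        have hc : QuotientAddGroup.mk (β b) = (0 : C ⧸ pMultiples p C) := by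
          apply hCinv
          intro g
          rw [actionBar_mk', QuotientAddGroup.eq, mem_pMultiples]
          obtain ⟨bg, hbg⟩ := hbg g
          refine ⟨β bg, ?_⟩
          rw [← map_nsmul, hbg, map_add, map_neg, hβequiv]
        rw [QuotientAddGroup.eq_zero_iff, mem_pMultiples] at hc
        obtain ⟨c, hcc⟩ := hc
        obtain ⟨b', hb'⟩ := hβsurj c
        have h0 : β (b - p • b') = 0 := by
          rw [map_sub, map_nsmul, hb', hcc, sub_self]
        obtain ⟨a, ha⟩ := (hexact _).1 h0
        refine ⟨QuotientAddGroup.mk a, ?_⟩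
        rw [mapBar_mk', QuotientAddGroup.eq, mem_pMultiples]
        refine ⟨b', ?_⟩
        rw [ha]
        abel
end

section
/- Let Γ be a group and let B be a commutative ring with a Γ-grading B = ⊕_{g ∈ Γ} B_g by additive subgroups satisfying B_g·B_h ⊆ B_{gh} and 1 ∈ B_1, and suppose the grading is strong: B_g·B_{g^{-1}} = B_1 for every g ∈ Γ. Set A = B_1, which is a subring of B, and regard each B_g as an A-module. Then each B_g is a finitely generated projective A-module, and for all g, h ∈ Γ the multiplication of B induces an isomorphism of A-modules B_g ⊗_A B_h ≅ B_{gh}. -/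
open scoped TensorProduct

section Aux

variable {A B : Type*} [CommRing A] [CommRing B] [Algebra A B]

/-- Every element of `M * N` is a finite sum of products. -/
lemma stmt17_exists_fin_sum (M N : Submodule A B) {b : B} (hb : b ∈ M * N) :
    ∃ (n : ℕ) (x y : Fin n → B), (∀ i, x i ∈ M) ∧ (∀ i, y i ∈ N) ∧ ∑ i, x i * y i = b := by
  refine Submodule.mul_induction_on hb ?_ ?_
  · intro m hm p hp
    exact ⟨1, fun _ => m, fun _ => p, fun _ => hm, fun _ => hp, by simp⟩
  · rintro b₁ b₂ ⟨n₁, x₁, y₁, hx₁, hy₁, h₁⟩ ⟨n₂, x₂, y₂, hx₂, hy₂, h₂⟩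
    refine ⟨n₁ + n₂, Fin.append x₁ x₂, Fin.append y₁ y₂, ?_, ?_, ?_⟩
    · intro i
      refine Fin.addCases (fun j => ?_) (fun j => ?_) i
      · simpa [Fin.append_left] using hx₁ j
      · simpa [Fin.append_right] using hx₂ j
    · intro i
      refine Fin.addCases (fun j => ?_) (fun j => ?_) i
      · simpa [Fin.append_left] using hy₁ j
      · simpa [Fin.append_right] using hy₂ j
    · rw [Fin.sum_univ_add]
      simp only [Fin.append_left, Fin.append_right]
      rw [h₁, h₂]

/-- Left multiplication by `c` as a linear map between submodules. -/
def stmt17_mulLeft {M N : Submodule A B} (c : B) (hc : ∀ b ∈ M, c * b ∈ N) :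
    M →ₗ[A] N where
  toFun b := ⟨c * b, hc b b.2⟩
  map_add' b₁ b₂ := by ext; simp [mul_add]
  map_smul' a b := by ext; simp [mul_smul_comm]

@[simp] lemma stmt17_mulLeft_apply {M N : Submodule A B} (c : B) (hc : ∀ b ∈ M, c * b ∈ N)
    (b : M) : (stmt17_mulLeft c hc b : B) = c * b := rfl

end Aux

/-- Let `Γ` be a group and `B` a commutative ring with a strong `Γ`-grading
`B = ⊕_{g} B_g` (so `B_g · B_h ⊆ B_{gh}`, `1 ∈ B_1`, and `B_g · B_{g⁻¹} = B_1` for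
all `g`), with base component `B_1 = A`.  Then each `B_g` is a finitely generated
projective `A`-module, and multiplication induces an isomorphism of `A`-modules
`B_g ⊗[A] B_h ≃ B_{gh}`.  (Here the situation is encoded by a commutative `A`-algebra
`B` with `A` embedded as the component of the grading at `1 ∈ Γ`.) -/
theorem stmt17 (Γ : Type*) [Group Γ] [DecidableEq Γ]
    (A B : Type*) [CommRing A] [CommRing B] [Algebra A B]
    (hinj : Function.Injective (algebraMap A B))
    (ℬ : Γ → Submodule A B)
    (hdecomp : DirectSum.IsInternal ℬ)
    (hmul : ∀ g h : Γ, ℬ g * ℬ h ≤ ℬ (g * h))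
    (hone : ℬ 1 = (1 : Submodule A B))
    (hstrong : ∀ g : Γ, ℬ g * ℬ g⁻¹ = ℬ 1) :
    ∀ g h : Γ,
      (Module.Finite A (ℬ g) ∧ Module.Projective A (ℬ g)) ∧
      ∃ e : (ℬ g ⊗[A] ℬ h) ≃ₗ[A] ℬ (g * h),
        ∀ (x : ℬ g) (y : ℬ h), (e (x ⊗ₜ y) : B) = (x : B) * (y : B) := by
  intro g h
  -- the canonical identification `A ≃ₗ[A] ℬ 1`
  have hmem1 : ∀ {b : B}, b ∈ ℬ 1 ↔ ∃ a : A, algebraMap A B a = b := by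
    intro b; rw [hone, Submodule.mem_one]
  have hφmem : ∀ a : A, algebraMap A B a ∈ ℬ 1 := fun a => hmem1.mpr ⟨a, rfl⟩
  set φ : A →ₗ[A] ℬ 1 := (Algebra.linearMap A B).codRestrict (ℬ 1) hφmem with hφ
  have hφbij : Function.Bijective φ := by
    constructor
    · intro a₁ a₂ hEq
      exact hinj (congrArg Subtype.val hEq)
    · rintro ⟨b, hb⟩
      obtain ⟨a, ha⟩ := hmem1.mp hb
      exact ⟨a, Subtype.ext ha⟩
  set eA : ℬ 1 ≃ₗ[A] A := (LinearEquiv.ofBijective φ hφbij).symm with heA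
  have heA_spec : ∀ z : ℬ 1, algebraMap A B (eA z) = (z : B) := by
    intro z
    have := (LinearEquiv.ofBijective φ hφbij).apply_symm_apply z
    exact congrArg Subtype.val this
  -- decomposition of 1
  have h1mem : (1 : B) ∈ ℬ g * ℬ g⁻¹ := by
    rw [hstrong g]
    exact hmem1.mpr ⟨1, map_one _⟩
  obtain ⟨n, x, y, hx, hy, hxy⟩ := stmt17_exists_fin_sum _ _ h1mem
  -- the "coefficient" maps
  have hymul : ∀ i : Fin n, ∀ b ∈ ℬ g, y i * b ∈ ℬ 1 := by
    intro i b hb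
    have : y i * b ∈ ℬ (g⁻¹ * g) := hmul g⁻¹ g (Submodule.mul_mem_mul (hy i) hb)
    simpa using this
  have hymulh : ∀ i : Fin n, ∀ b ∈ ℬ (g * h), y i * b ∈ ℬ h := by
    intro i b hb
    have : y i * b ∈ ℬ (g⁻¹ * (g * h)) := hmul g⁻¹ (g * h) (Submodule.mul_mem_mul (hy i) hb)
    simpa using this
  -- splitting of ℬ g through a free module
  set f : ℬ g →ₗ[A] (Fin n → A) :=
    LinearMap.pi (fun i => eA.toLinearMap ∘ₗ stmt17_mulLeft (y i) (hymul i)) with hf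
  set s : (Fin n → A) →ₗ[A] ℬ g :=
    ∑ i : Fin n, (LinearMap.toSpanSingleton A (ℬ g) ⟨x i, hx i⟩) ∘ₗ (LinearMap.proj i) with hs
  have hsf : ∀ b : ℬ g, s (f b) = b := by
    intro b
    apply Subtype.ext
    have : (s (f b) : B) = ∑ i : Fin n, (y i * (b : B)) * x i := by
      rw [hs]
      simp only [LinearMap.coe_sum, Finset.sum_apply, LinearMap.comp_apply,
        LinearMap.proj_apply, LinearMap.toSpanSingleton_apply]
      rw [AddSubmonoidClass.coe_finset_sum]
      refine Finset.sum_congr rfl fun i _ => ?_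
      rw [Submodule.coe_smul, Algebra.smul_def]
      congr 1
      rw [hf]
      simp only [LinearMap.pi_apply, LinearMap.comp_apply, LinearEquiv.coe_coe]
      rw [heA_spec]
      rfl
    rw [this]
    have : ∑ i : Fin n, (y i * (b : B)) * x i = (∑ i : Fin n, x i * y i) * (b : B) := by
      rw [Finset.sum_mul]
      exact Finset.sum_congr rfl fun i _ => by ring
    rw [this, hxy, one_mul]
  have hsplit : s.comp f = LinearMap.id := LinearMap.ext hsf
  constructor
  · constructor
    · exact Module.Finite.of_surjective s (fun b => ⟨f b, hsf b⟩)
    · exact Module.Projective.of_split f s hsplit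
  -- the multiplication isomorphism
  · have hμmem : ∀ c : ℬ g ⊗[A] ℬ h, Submodule.mulMap (ℬ g) (ℬ h) c ∈ ℬ (g * h) := by
      intro c
      apply hmul g h
      rw [← Submodule.mulMap_range]
      exact ⟨c, rfl⟩
    set μ : ℬ g ⊗[A] ℬ h →ₗ[A] ℬ (g * h) :=
      (Submodule.mulMap (ℬ g) (ℬ h)).codRestrict (ℬ (g * h)) hμmem with hμ
    set ν : ℬ (g * h) →ₗ[A] ℬ g ⊗[A] ℬ h :=
      ∑ i : Fin n, (TensorProduct.mk A (ℬ g) (ℬ h) ⟨x i, hx i⟩) ∘ₗ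
        stmt17_mulLeft (y i) (hymulh i) with hν
    have hμν : ∀ b : ℬ (g * h), μ (ν b) = b := by
      intro b
      apply Subtype.ext
      rw [hν]
      simp only [LinearMap.coe_sum, Finset.sum_apply, map_sum, LinearMap.comp_apply,
        TensorProduct.mk_apply]
      rw [AddSubmonoidClass.coe_finset_sum]
      have : ∀ i : Fin n, ((μ ((⟨x i, hx i⟩ : ℬ g) ⊗ₜ[A] stmt17_mulLeft (y i) (hymulh i) b)) : B)
          = x i * (y i * (b : B)) := fun i => rfl
      simp only [this]
      calc ∑ i : Fin n, x i * (y i * (b : B))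
          = (∑ i : Fin n, x i * y i) * (b : B) := by
            rw [Finset.sum_mul]; exact Finset.sum_congr rfl fun i _ => by ring
        _ = (b : B) := by rw [hxy, one_mul]
    have hνμ : ∀ c : ℬ g ⊗[A] ℬ h, ν (μ c) = c := by
      have hcomp : (ν.comp μ) = LinearMap.id := by
        apply TensorProduct.ext'
        intro u v
        simp only [LinearMap.comp_apply, LinearMap.id_apply]
        rw [hν]
        simp only [LinearMap.coe_sum, Finset.sum_apply, LinearMap.comp_apply,
          TensorProduct.mk_apply]
        -- coefficients a i with algebraMap (a i) = y i * u
        choose a ha using fun i : Fin n => hmem1.mp (hymul i u u.2)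
        have hterm : ∀ i : Fin n,
            (⟨x i, hx i⟩ : ℬ g) ⊗ₜ[A] (stmt17_mulLeft (y i) (hymulh i) (μ (u ⊗ₜ v)))
            = ((a i) • (⟨x i, hx i⟩ : ℬ g)) ⊗ₜ[A] v := by
          intro i
          have h1 : (stmt17_mulLeft (y i) (hymulh i) (μ (u ⊗ₜ v)) : ℬ h)
              = (a i) • v := by
            apply Subtype.ext
            rw [stmt17_mulLeft_apply, Submodule.coe_smul, Algebra.smul_def, ha i]
            show y i * ((u : B) * (v : B)) = _
            rw [mul_assoc]
          rw [h1]
          exact (TensorProduct.smul_tmul _ _ _).symm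
        rw [Finset.sum_congr rfl fun i _ => hterm i, ← TensorProduct.sum_tmul]
        congr 1
        apply Subtype.ext
        rw [AddSubmonoidClass.coe_finset_sum]
        simp only [SetLike.val_smul, Algebra.smul_def]
        calc ∑ i : Fin n, algebraMap A B (a i) * x i
            = (∑ i : Fin n, x i * y i) * (u : B) := by
              rw [Finset.sum_mul]
              refine Finset.sum_congr rfl fun i _ => ?_
              rw [ha i]; ring
          _ = (u : B) := by rw [hxy, one_mul]
      intro c
      exact DFunLike.congr_fun hcomp c
    refine ⟨LinearEquiv.ofLinear μ ν (LinearMap.ext hμν) (LinearMap.ext hνμ), ?_⟩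
    intro u v
    rfl
end

section
/- Let Γ be a finite abelian group of exponent e and let K be a field containing a primitive e-th root of unity. Let B be a commutative K-algebra equipped with an action of Γ by K-algebra automorphisms, let A = B^Γ be the fixed subalgebra, and assume B is finitely generated as an A-module. Assume further that the canonical map B ⊗_A B → Fun(Γ, B) sending x ⊗ y to the function γ ↦ x·(γ·y) is bijective (i.e., A ⊆ B is a Γ-Galois extension). For each character χ : Γ → K^×, let B_χ = {b ∈ B : γ·b = χ(γ)b for all γ ∈ Γ}, an A-submodule of B. Then for all characters χ, ψ of Γ: (i) B_χ·B_ψ = B_{χψ} as A-submodules of B; (ii) multiplication induces an isomorphism of A-modules B_χ ⊗_A B_ψ ≅ B_{χψ}; and (iii) each B_χ is an invertible A-module, i.e., finitely generated projective with B_χ·B_{χ^{-1}} = A. -/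
open scoped TensorProduct

section

variable (K Γ B : Type*) [Field K] [CommGroup Γ] [Fintype Γ]
  [CommRing B] [Algebra K B] [MulSemiringAction Γ B] [SMulCommClass Γ K B]

/-- The fixed subalgebra `A = B^Γ` of a `K`-algebra `B` under an action of `Γ` by
`K`-algebra automorphisms. -/
def fixedSubalgebra : Subalgebra K B where
  carrier := {b | ∀ γ : Γ, γ • b = b}
  mul_mem' := fun ha hb γ => by rw [smul_mul', ha γ, hb γ]
  add_mem' := fun ha hb γ => by rw [smul_add, ha γ, hb γ]
  algebraMap_mem' := fun k γ => by
    rw [Algebra.algebraMap_eq_smul_one, smul_comm, smul_one]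

/-- The `χ`-component `B_χ = {b ∈ B : γ • b = χ(γ) b for all γ}` as a module over
the fixed subalgebra `A = B^Γ`. -/
def charComponent (χ : Γ →* Kˣ) : Submodule (fixedSubalgebra K Γ B) B where
  carrier := {b | ∀ γ : Γ, γ • b = (χ γ : K) • b}
  add_mem' := by intro a b ha hb γ; rw [smul_add, ha γ, hb γ, smul_add]
  zero_mem' := by intro γ; simp
  smul_mem' := by
    intro a b hb γ
    rw [Algebra.smul_def, smul_mul', hb γ]
    have ha : (γ • ((algebraMap (fixedSubalgebra K Γ B) B) a) : B)
        = (algebraMap (fixedSubalgebra K Γ B) B) a := a.2 γ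
    rw [ha, Algebra.smul_def, Algebra.smul_def, mul_left_comm]

/-- The canonical `A`-bilinear map `B × B → Fun(Γ, B)`, `(x, y) ↦ (γ ↦ x·(γ•y))`. -/
def galoisBilinear :
    B →ₗ[fixedSubalgebra K Γ B] B →ₗ[fixedSubalgebra K Γ B] (Γ → B) where
  toFun b :=
    { toFun := fun b' γ => b * γ • b'
      map_add' := fun x y => funext fun γ => by
        show b * γ • (x + y) = b * γ • x + b * γ • y
        rw [smul_add, mul_add]
      map_smul' := fun a x => funext fun γ => by
        have ha : (γ • ((algebraMap (fixedSubalgebra K Γ B) B) a) : B)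
            = (algebraMap (fixedSubalgebra K Γ B) B) a := a.2 γ
        show b * γ • (a • x) = a • (b * γ • x)
        rw [Algebra.smul_def, smul_mul', ha, Algebra.smul_def, mul_left_comm] }
  map_add' := fun x y => LinearMap.ext fun b' => funext fun γ => by
    show (x + y) * γ • b' = x * γ • b' + y * γ • b'
    rw [add_mul]
  map_smul' := fun a x => LinearMap.ext fun b' => funext fun γ => by
    show (a • x) * γ • b' = a • (x * γ • b')
    rw [Algebra.smul_def, Algebra.smul_def, mul_assoc]

/-- The canonical map `B ⊗[A] B → Fun(Γ, B)` sending `x ⊗ y` to `γ ↦ x·(γ•y)`. -/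
noncomputable def galoisMap :
    B ⊗[fixedSubalgebra K Γ B] B →ₗ[fixedSubalgebra K Γ B] (Γ → B) :=
  TensorProduct.lift (galoisBilinear K Γ B)

set_option maxHeartbeats 1000000
set_option synthInstance.maxHeartbeats 400000
set_option linter.unusedSectionVars false

namespace Stmt19Aux

variable {K Γ B}

lemma mem_char {χ : Γ →* Kˣ} {b : B} :
    b ∈ charComponent K Γ B χ ↔ ∀ γ : Γ, γ • b = (χ γ : K) • b := Iff.rfl

lemma algebraMap_apply (a : fixedSubalgebra K Γ B) :
    algebraMap (fixedSubalgebra K Γ B) B a = (a : B) := rfl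

lemma smul_def (a : fixedSubalgebra K Γ B) (b : B) : a • b = (a : B) * b := rfl

lemma ksmul_mem {M : Submodule (fixedSubalgebra K Γ B) B} {b : B} (hb : b ∈ M) (k : K) :
    k • b ∈ M := by
  have h : (⟨algebraMap K B k, fun γ => by
      rw [Algebra.algebraMap_eq_smul_one, smul_comm, smul_one]⟩ :
      fixedSubalgebra K Γ B) • b = k • b := by
    show algebraMap K B k * b = k • b
    rw [Algebra.smul_def]
  exact h ▸ M.smul_mem _ hb

lemma mul_char_mem {χ ψ : Γ →* Kˣ} {x y : B} (hx : x ∈ charComponent K Γ B χ)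
    (hy : y ∈ charComponent K Γ B ψ) : x * y ∈ charComponent K Γ B (χ * ψ) := by
  intro γ
  rw [smul_mul', hx γ, hy γ, MonoidHom.mul_apply, Units.val_mul, mul_smul,
    smul_mul_assoc, mul_smul_comm]

lemma char_one_eq : charComponent K Γ B (1 : Γ →* Kˣ) = 1 := by
  ext b
  rw [Submodule.one_eq_range]
  constructor
  · intro hb
    exact ⟨⟨b, fun γ => by simpa using hb γ⟩, rfl⟩
  · rintro ⟨a, rfl⟩ γ
    simpa using a.2 γ

end Stmt19Aux


set_option linter.unusedSectionVars false

namespace Stmt19Aux2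

open Stmt19Aux

variable {K Γ B}

/-- Unnormalized projector onto the `χ`-component. -/
noncomputable def P (χ : Γ →* Kˣ) (b : B) : B := ∑ γ : Γ, (((χ γ)⁻¹ : Kˣ) : K) • γ • b

lemma P_mem (χ : Γ →* Kˣ) (b : B) : P χ b ∈ charComponent K Γ B χ := by
  intro δ
  unfold P
  rw [Finset.smul_sum, Finset.smul_sum]
  refine Fintype.sum_bijective (fun γ => δ * γ) (Group.mulLeft_bijective δ) _ _ fun γ => ?_
  rw [smul_comm, smul_smul, ← mul_smul, map_mul]
  congr 1
  rw [mul_inv, Units.val_mul, ← mul_assoc, ← Units.val_mul, mul_inv_cancel,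
    Units.val_one, one_mul]

lemma card_ne_zero {e : ℕ} (he : Monoid.exponent Γ = e) {ζ : K} (hζ : IsPrimitiveRoot ζ e) :
    (Fintype.card Γ : K) ≠ 0 := by
  haveI : NeZero e := ⟨he ▸ Monoid.exponent_ne_zero_of_finite⟩
  have heK : (e : K) ≠ 0 := hζ.neZero'.out
  intro h0
  have hpdvd : ringChar K ∣ Fintype.card Γ :=
    (CharP.cast_eq_zero_iff K (ringChar K) _).1 h0
  have hp0 : ringChar K ≠ 0 := fun h =>
    absurd (zero_dvd_iff.1 (h ▸ hpdvd)) Fintype.card_ne_zero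
  have hpprime : (ringChar K).Prime :=
    (CharP.char_is_prime_or_zero K (ringChar K)).resolve_right hp0
  haveI := Fact.mk hpprime
  obtain ⟨g, hg⟩ := exists_prime_orderOf_dvd_card (ringChar K) hpdvd
  have hpe : ringChar K ∣ e := he ▸ hg ▸ Monoid.order_dvd_exponent g
  exact heK ((CharP.cast_eq_zero_iff K (ringChar K) e).2 hpe)


lemma one_mem_mul (hGalois : Function.Bijective (galoisMap K Γ B))
    (hcard : (Fintype.card Γ : K) ≠ 0) (χ : Γ →* Kˣ) :
    (1 : B) ∈ charComponent K Γ B χ * charComponent K Γ B χ⁻¹ := by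
  classical
  obtain ⟨t, ht⟩ := hGalois.2 (Pi.single (1 : Γ) (1 : B))
  obtain ⟨s, rfl⟩ := TensorProduct.exists_finset t
  have key : ∀ γ : Γ, (∑ p ∈ s, p.1 * γ • p.2) = if γ = 1 then 1 else 0 := by
    intro γ
    have h := congrFun ht γ
    rw [map_sum] at h
    simp only [galoisMap, Finset.sum_apply, TensorProduct.lift.tmul] at h
    rw [Pi.single_apply] at h
    rw [← h]
    exact Finset.sum_congr rfl fun p _ => rfl
  have key2 : ∀ γ δ : Γ, (∑ p ∈ s, (γ • p.1) * (δ • p.2)) = if γ = δ then 1 else 0 := by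
    intro γ δ
    have h2 := congrArg (γ • ·) (key (γ⁻¹ * δ))
    simp only [Finset.smul_sum, smul_mul', smul_smul, mul_inv_cancel_left, smul_ite,
      smul_one, smul_zero, inv_mul_eq_one] at h2
    exact h2
  have hS : (∑ p ∈ s, P χ p.1 * P χ⁻¹ p.2) = (Fintype.card Γ : K) • (1 : B) := by
    have expand : ∀ p : B × B, P χ p.1 * P χ⁻¹ p.2
        = ∑ γ : Γ, ∑ δ : Γ, (((((χ γ)⁻¹ : Kˣ) : K)) * ((((χ⁻¹ δ)⁻¹ : Kˣ) : K))) •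
            ((γ • p.1) * (δ • p.2)) := by
      intro p
      rw [P, P, Finset.sum_mul_sum]
      exact Finset.sum_congr rfl fun γ _ => Finset.sum_congr rfl fun δ _ =>
        smul_mul_smul_comm _ _ _ _
    calc (∑ p ∈ s, P χ p.1 * P χ⁻¹ p.2)
        = ∑ γ : Γ, ∑ δ : Γ, (((((χ γ)⁻¹ : Kˣ) : K)) * ((((χ⁻¹ δ)⁻¹ : Kˣ) : K))) •
            ∑ p ∈ s, ((γ • p.1) * (δ • p.2)) := by
          simp_rw [expand]
          rw [Finset.sum_comm]
          refine Finset.sum_congr rfl fun γ _ => ?_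
          rw [Finset.sum_comm]
          exact Finset.sum_congr rfl fun δ _ => (Finset.smul_sum).symm
      _ = ∑ γ : Γ, (1 : B) := by
          refine Finset.sum_congr rfl fun γ _ => ?_
          simp_rw [key2, smul_ite, smul_zero]
          rw [Finset.sum_ite_eq]
          simp
      _ = (Fintype.card Γ : K) • (1 : B) := by
          rw [Finset.sum_const, Finset.card_univ, Nat.cast_smul_eq_nsmul]
  have hmem : (∑ p ∈ s, P χ p.1 * P χ⁻¹ p.2) ∈
      charComponent K Γ B χ * charComponent K Γ B χ⁻¹ :=
    Submodule.sum_mem _ fun p _ => Submodule.mul_mem_mul (P_mem χ p.1) (P_mem χ⁻¹ p.2)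
  have hfin := ksmul_mem hmem ((Fintype.card Γ : K)⁻¹)
  rwa [hS, smul_smul, inv_mul_cancel₀ hcard, one_smul] at hfin


lemma mul_char_le (χ ψ : Γ →* Kˣ) :
    charComponent K Γ B χ * charComponent K Γ B ψ ≤ charComponent K Γ B (χ * ψ) :=
  Submodule.mul_le.2 fun x hx y hy => mul_char_mem hx hy

lemma mul_char_eq (h1 : ∀ φ : Γ →* Kˣ,
      (1 : B) ∈ charComponent K Γ B φ * charComponent K Γ B φ⁻¹) (χ ψ : Γ →* Kˣ) :
    charComponent K Γ B χ * charComponent K Γ B ψ = charComponent K Γ B (χ * ψ) := by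
  refine le_antisymm (mul_char_le χ ψ) ?_
  have hψ : (1 : Submodule (fixedSubalgebra K Γ B) B) ≤
      charComponent K Γ B ψ⁻¹ * charComponent K Γ B ψ := by
    rw [mul_comm]
    exact Submodule.one_le.2 (h1 ψ)
  calc charComponent K Γ B (χ * ψ)
      = charComponent K Γ B (χ * ψ) * 1 := (mul_one _).symm
    _ ≤ charComponent K Γ B (χ * ψ) *
        (charComponent K Γ B ψ⁻¹ * charComponent K Γ B ψ) :=
        mul_le_mul' le_rfl hψ
    _ = (charComponent K Γ B (χ * ψ) * charComponent K Γ B ψ⁻¹) *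
        charComponent K Γ B ψ := (mul_assoc _ _ _).symm
    _ ≤ charComponent K Γ B (χ * ψ * ψ⁻¹) * charComponent K Γ B ψ :=
        mul_le_mul' (mul_char_le _ _) le_rfl
    _ = charComponent K Γ B χ * charComponent K Γ B ψ := by
        rw [show χ * ψ * ψ⁻¹ = χ from mul_inv_cancel_right χ ψ]

lemma char_mul_inv (h1 : ∀ φ : Γ →* Kˣ,
      (1 : B) ∈ charComponent K Γ B φ * charComponent K Γ B φ⁻¹) (χ : Γ →* Kˣ) :
    charComponent K Γ B χ * charComponent K Γ B χ⁻¹ = 1 := by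
  refine le_antisymm ?_ (Submodule.one_le.2 (h1 χ))
  have h := mul_char_le (K := K) (Γ := Γ) (B := B) χ χ⁻¹
  rwa [show χ * χ⁻¹ = 1 from mul_inv_cancel χ, char_one_eq] at h

lemma exists_dual {χ : Γ →* Kˣ}
    (h : (1 : B) ∈ charComponent K Γ B χ * charComponent K Γ B χ⁻¹) :
    ∃ (n : ℕ) (x y : Fin n → B),
      (∀ i, x i ∈ charComponent K Γ B χ) ∧ (∀ i, y i ∈ charComponent K Γ B χ⁻¹) ∧
      ∑ i, x i * y i = 1 := by
  have H : ∀ b ∈ charComponent K Γ B χ * charComponent K Γ B χ⁻¹,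
      ∃ (n : ℕ) (x y : Fin n → B),
        (∀ i, x i ∈ charComponent K Γ B χ) ∧ (∀ i, y i ∈ charComponent K Γ B χ⁻¹) ∧
        ∑ i, x i * y i = b := by
    intro b hb
    refine Submodule.mul_induction_on hb ?_ ?_
    · intro m hm n hn
      exact ⟨1, fun _ => m, fun _ => n, fun _ => hm, fun _ => hn, by simp⟩
    · rintro u v ⟨n₁, x₁, y₁, hx₁, hy₁, hs₁⟩ ⟨n₂, x₂, y₂, hx₂, hy₂, hs₂⟩
      refine ⟨n₁ + n₂, Fin.append x₁ x₂, Fin.append y₁ y₂, ?_, ?_, ?_⟩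
      · intro i
        refine Fin.addCases (fun j => ?_) (fun j => ?_) i
        · rw [Fin.append_left]; exact hx₁ j
        · rw [Fin.append_right]; exact hx₂ j
      · intro i
        refine Fin.addCases (fun j => ?_) (fun j => ?_) i
        · rw [Fin.append_left]; exact hy₁ j
        · rw [Fin.append_right]; exact hy₂ j
      · rw [Fin.sum_univ_add]
        simp only [Fin.append_left, Fin.append_right]
        rw [hs₁, hs₂]
  exact H 1 h

variable (χ ψ : Γ →* Kˣ)

/-- Multiplication as a bilinear map `B_χ → B_ψ → B_{χψ}`. -/
def mulLin :
    charComponent K Γ B χ →ₗ[fixedSubalgebra K Γ B]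
      charComponent K Γ B ψ →ₗ[fixedSubalgebra K Γ B] charComponent K Γ B (χ * ψ) where
  toFun x :=
    { toFun := fun y => ⟨(x : B) * (y : B), mul_char_mem x.2 y.2⟩
      map_add' := fun y z => Subtype.ext (by simp [mul_add])
      map_smul' := fun a y => Subtype.ext (by
        simp only [SetLike.val_smul, RingHom.id_apply]
        rw [smul_def, smul_def, mul_left_comm]) }
  map_add' := fun x z => LinearMap.ext fun y => Subtype.ext (by simp [add_mul])
  map_smul' := fun a x => LinearMap.ext fun y => Subtype.ext (by
    simp only [LinearMap.coe_mk, AddHom.coe_mk, SetLike.val_smul, RingHom.id_apply,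
      LinearMap.smul_apply]
    rw [smul_def, smul_def, mul_assoc])

/-- The multiplication map `B_χ ⊗ B_ψ → B_{χψ}`. -/
noncomputable def mulMap :
    charComponent K Γ B χ ⊗[fixedSubalgebra K Γ B] charComponent K Γ B ψ
      →ₗ[fixedSubalgebra K Γ B] charComponent K Γ B (χ * ψ) :=
  TensorProduct.lift (mulLin χ ψ)

lemma mulMap_tmul (x : charComponent K Γ B χ) (y : charComponent K Γ B ψ) :
    (mulMap χ ψ (x ⊗ₜ y) : B) = (x : B) * (y : B) := by
  rw [mulMap, TensorProduct.lift.tmul]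
  rfl

variable {χ ψ} {ι : Type} [Fintype ι] (x y : ι → B)

/-- The inverse of the multiplication map, built from a dual family. -/
noncomputable def invMap (hx : ∀ i, x i ∈ charComponent K Γ B χ)
    (hmem : ∀ i (b : B), b ∈ charComponent K Γ B (χ * ψ) →
      y i * b ∈ charComponent K Γ B ψ) :
    charComponent K Γ B (χ * ψ) →ₗ[fixedSubalgebra K Γ B]
      charComponent K Γ B χ ⊗[fixedSubalgebra K Γ B] charComponent K Γ B ψ where
  toFun b := ∑ i, (⟨x i, hx i⟩ : charComponent K Γ B χ) ⊗ₜ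
      (⟨y i * b, hmem i b b.2⟩ : charComponent K Γ B ψ)
  map_add' := fun b c => by
    rw [← Finset.sum_add_distrib]
    refine Finset.sum_congr rfl fun i _ => ?_
    rw [← TensorProduct.tmul_add]
    congr 1
    exact Subtype.ext (by simp [mul_add])
  map_smul' := fun a b => by
    rw [RingHom.id_apply, Finset.smul_sum]
    refine Finset.sum_congr rfl fun i _ => ?_
    rw [← TensorProduct.tmul_smul]
    congr 1
    refine Subtype.ext ?_
    simp only [SetLike.val_smul]
    rw [smul_def, smul_def, mul_left_comm]

/-- Dual-basis map `B_χ → Aⁿ`. -/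
def projF (hfix : ∀ i (b : B), b ∈ charComponent K Γ B χ →
    y i * b ∈ fixedSubalgebra K Γ B) :
    charComponent K Γ B χ →ₗ[fixedSubalgebra K Γ B] (ι → fixedSubalgebra K Γ B) where
  toFun b i := ⟨y i * b, hfix i b b.2⟩
  map_add' := fun b c => funext fun i => Subtype.ext (by simp [mul_add])
  map_smul' := fun a b => funext fun i => Subtype.ext (by
    simp only [SetLike.val_smul, RingHom.id_apply, Pi.smul_apply, smul_eq_mul,
      MulMemClass.coe_mul]
    rw [smul_def, mul_left_comm])

/-- Evaluation map `Aⁿ → B_χ`. -/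
def projG (hx : ∀ i, x i ∈ charComponent K Γ B χ) :
    (ι → fixedSubalgebra K Γ B) →ₗ[fixedSubalgebra K Γ B] charComponent K Γ B χ where
  toFun c := ∑ i, c i • (⟨x i, hx i⟩ : charComponent K Γ B χ)
  map_add' := fun c d => by
    simp only [Pi.add_apply, add_smul, Finset.sum_add_distrib]
  map_smul' := fun a c => by
    simp only [RingHom.id_apply, Pi.smul_apply, smul_eq_mul, mul_smul, ← Finset.smul_sum]


lemma dual_sum (hsum : ∑ i, x i * y i = 1) (b : B) : ∑ i, (y i * b) * x i = b := by
  have h : ∑ i, (y i * b) * x i = b * ∑ i, x i * y i := by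
    rw [Finset.mul_sum]
    exact Finset.sum_congr rfl fun i _ => by ring
  rw [h, hsum, mul_one]

lemma invMap_apply (hx : ∀ i, x i ∈ charComponent K Γ B χ)
    (hmem : ∀ i (b : B), b ∈ charComponent K Γ B (χ * ψ) →
      y i * b ∈ charComponent K Γ B ψ) (b : charComponent K Γ B (χ * ψ)) :
    invMap x y hx hmem b = ∑ i, (⟨x i, hx i⟩ : charComponent K Γ B χ) ⊗ₜ
      (⟨y i * b, hmem i b b.2⟩ : charComponent K Γ B ψ) := rfl

lemma mulMap_comp_invMap (hx : ∀ i, x i ∈ charComponent K Γ B χ)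
    (hmem : ∀ i (b : B), b ∈ charComponent K Γ B (χ * ψ) →
      y i * b ∈ charComponent K Γ B ψ) (hsum : ∑ i, x i * y i = 1) :
    (mulMap χ ψ).comp (invMap x y hx hmem) = LinearMap.id := by
  refine LinearMap.ext fun b => Subtype.ext ?_
  rw [LinearMap.comp_apply, invMap_apply, map_sum, LinearMap.id_apply,
    AddSubmonoidClass.coe_finset_sum]
  calc ∑ i, ((mulMap χ ψ) ((⟨x i, hx i⟩ : charComponent K Γ B χ) ⊗ₜ
          (⟨y i * b, hmem i b b.2⟩ : charComponent K Γ B ψ)) : B)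
      = ∑ i, x i * (y i * (b : B)) :=
        Finset.sum_congr rfl fun i _ => mulMap_tmul χ ψ _ _
    _ = ∑ i, (y i * (b : B)) * x i := Finset.sum_congr rfl fun i _ => by ring
    _ = (b : B) := dual_sum x y hsum b

lemma invMap_comp_mulMap (hx : ∀ i, x i ∈ charComponent K Γ B χ)
    (hy : ∀ i, y i ∈ charComponent K Γ B χ⁻¹)
    (hmem : ∀ i (b : B), b ∈ charComponent K Γ B (χ * ψ) →
      y i * b ∈ charComponent K Γ B ψ) (hsum : ∑ i, x i * y i = 1) :
    (invMap x y hx hmem).comp (mulMap χ ψ) = LinearMap.id := by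
  refine TensorProduct.ext' fun u v => ?_
  rw [LinearMap.comp_apply, LinearMap.id_apply]
  have hA : ∀ i, y i * (u : B) ∈ fixedSubalgebra K Γ B := fun i γ => by
    have h := mul_char_mem (hy i) u.2 γ
    rw [show χ⁻¹ * χ = 1 from inv_mul_cancel χ] at h
    simpa using h
  have step : (invMap x y hx hmem) ((mulMap χ ψ) (u ⊗ₜ v))
      = ∑ i, (((⟨y i * u, hA i⟩ : fixedSubalgebra K Γ B) •
          (⟨x i, hx i⟩ : charComponent K Γ B χ)) ⊗ₜ v) := by
    rw [invMap_apply]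
    refine Finset.sum_congr rfl fun i _ => ?_
    rw [TensorProduct.smul_tmul]
    congr 1
    refine Subtype.ext ?_
    show y i * ((mulMap χ ψ) (u ⊗ₜ v) : B)
      = ((⟨y i * (u : B), hA i⟩ : fixedSubalgebra K Γ B) • v : B)
    rw [mulMap_tmul, smul_def, ← mul_assoc]
  rw [step, ← TensorProduct.sum_tmul]
  congr 1
  refine Subtype.ext ?_
  rw [AddSubmonoidClass.coe_finset_sum]
  calc ∑ i, (((⟨y i * (u : B), hA i⟩ : fixedSubalgebra K Γ B) •
          (⟨x i, hx i⟩ : charComponent K Γ B χ)) : B)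
      = ∑ i, (y i * (u : B)) * x i := Finset.sum_congr rfl fun i _ => rfl
    _ = (u : B) := dual_sum x y hsum u

lemma projG_apply (hx : ∀ i, x i ∈ charComponent K Γ B χ)
    (c : ι → fixedSubalgebra K Γ B) :
    projG x hx c = ∑ i, c i • (⟨x i, hx i⟩ : charComponent K Γ B χ) := rfl

lemma projG_comp_projF (hx : ∀ i, x i ∈ charComponent K Γ B χ)
    (hfix : ∀ i (b : B), b ∈ charComponent K Γ B χ →
      y i * b ∈ fixedSubalgebra K Γ B) (hsum : ∑ i, x i * y i = 1) :
    (projG x hx).comp (projF y hfix) = LinearMap.id := by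
  refine LinearMap.ext fun b => Subtype.ext ?_
  rw [LinearMap.comp_apply, LinearMap.id_apply, projG_apply,
    AddSubmonoidClass.coe_finset_sum]
  calc ∑ i, ((((projF y hfix) b i) • (⟨x i, hx i⟩ : charComponent K Γ B χ)) : B)
      = ∑ i, (y i * (b : B)) * x i := Finset.sum_congr rfl fun i _ => rfl
    _ = (b : B) := dual_sum x y hsum b

end Stmt19Aux2

open Stmt19Aux Stmt19Aux2

/-- Let `Γ` be a finite abelian group of exponent `e` and `K` a field containing a
primitive `e`-th root of unity.  Let `B` be a commutative `K`-algebra with an action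
of `Γ` by `K`-algebra automorphisms, let `A = B^Γ`, and assume `B` is finitely
generated as an `A`-module and that `A ⊆ B` is `Γ`-Galois (the canonical map
`B ⊗[A] B → Fun(Γ, B)` is bijective).  Then for all characters `χ, ψ : Γ → Kˣ`:
(i) `B_χ · B_ψ = B_{χψ}`; (ii) multiplication induces an isomorphism of `A`-modules
`B_χ ⊗[A] B_ψ ≃ B_{χψ}`; (iii) each `B_χ` is invertible: finitely generated
projective with `B_χ · B_{χ⁻¹} = A`. -/
theorem stmt19
    (e : ℕ) (he : Monoid.exponent Γ = e) (ζ : K) (hζ : IsPrimitiveRoot ζ e)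
    [Module.Finite (fixedSubalgebra K Γ B) B]
    (hGalois : Function.Bijective (galoisMap K Γ B)) :
    ∀ χ ψ : Γ →* Kˣ,
      charComponent K Γ B χ * charComponent K Γ B ψ = charComponent K Γ B (χ * ψ) ∧
      (∃ E : (charComponent K Γ B χ ⊗[fixedSubalgebra K Γ B] charComponent K Γ B ψ)
          ≃ₗ[fixedSubalgebra K Γ B] charComponent K Γ B (χ * ψ),
        ∀ (x : charComponent K Γ B χ) (y : charComponent K Γ B ψ),
          (E (x ⊗ₜ y) : B) = (x : B) * (y : B)) ∧
      Module.Finite (fixedSubalgebra K Γ B) (charComponent K Γ B χ) ∧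
      Module.Projective (fixedSubalgebra K Γ B) (charComponent K Γ B χ) ∧
      charComponent K Γ B χ * charComponent K Γ B χ⁻¹ =
        (1 : Submodule (fixedSubalgebra K Γ B) B) := by
  classical
  intro χ ψ
  have hcard : (Fintype.card Γ : K) ≠ 0 := card_ne_zero he hζ
  have h1 : ∀ φ : Γ →* Kˣ,
      (1 : B) ∈ charComponent K Γ B φ * charComponent K Γ B φ⁻¹ :=
    fun φ => one_mem_mul hGalois hcard φ
  obtain ⟨n, x, y, hx, hy, hsum⟩ := exists_dual (h1 χ)
  have hfix : ∀ i (b : B), b ∈ charComponent K Γ B χ →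
      y i * b ∈ fixedSubalgebra K Γ B := by
    intro i b hb γ
    have h := mul_char_mem (hy i) hb γ
    rw [show χ⁻¹ * χ = 1 from inv_mul_cancel χ] at h
    simpa using h
  have hmem : ∀ i (b : B), b ∈ charComponent K Γ B (χ * ψ) →
      y i * b ∈ charComponent K Γ B ψ := by
    intro i b hb
    have h := mul_char_mem (hy i) hb
    rwa [show χ⁻¹ * (χ * ψ) = ψ from inv_mul_cancel_left χ ψ] at h
  refine ⟨mul_char_eq h1 χ ψ, ?_, ?_, ?_, char_mul_inv h1 χ⟩
  · exact ⟨LinearEquiv.ofLinear (mulMap χ ψ) (invMap x y hx hmem)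
      (mulMap_comp_invMap x y hx hmem hsum) (invMap_comp_mulMap x y hx hy hmem hsum),
      fun u v => mulMap_tmul χ ψ u v⟩
  · exact Module.Finite.of_surjective (projG x hx) fun b =>
      ⟨(projF y hfix) b, by
        rw [← LinearMap.comp_apply, projG_comp_projF x y hx hfix hsum, LinearMap.id_apply]⟩
  · exact Module.Projective.of_split (projF y hfix) (projG x hx)
      (projG_comp_projF x y hx hfix hsum)

end
end
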